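/- Let H be a real Hilbert space and B : H → H be (1/β)-cocoercive with β > 0. Then the reflected resolvent R_B = 2J_B − Id is (β/(1+β))-averaged, where J_B = (Id + B)^{-1}. -/
import Mathlib


open RealInnerProductSpace

theorem reflected_resolvent_of_cocoercive_averaged
    {H : Type*} [NormedAddCommGroup H] [InnerProductSpace ℝ H]
    (β : ℝ) (hβ : 0 < β) (B J : H → H)
    (hB : ∀ x y : H, ⟪B x - B y, x - y⟫ ≥ (1 / β) * ‖B x - B y‖ ^ 2)
    (hJ : ∀ x : H, J x + B (J x) = x) :
    ∃ N : H → H, (∀ x y : H, ‖N x - N y‖ ≤ ‖x - y‖) ∧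
      ∀ x : H, (2 : ℝ) • J x - x =
        (1 - β / (1 + β)) • x + (β / (1 + β)) • N x := by
  have hβ' : β ≠ 0 := hβ.ne'
  have h1β : (1 : ℝ) + β ≠ 0 := by positivity
  refine ⟨fun x => ((2 * (1 + β)) / β) • J x - ((2 + β) / β) • x, ?_, ?_⟩
  · intro x y
    set c : ℝ := (2 + β) / β with hcdef
    set d := J x - J y with hd
    set b := B (J x) - B (J y) with hb
    have hxy : x - y = d + b := by
      conv_lhs => rw [← hJ x, ← hJ y]
      rw [hd, hb]; abel
    have hN : ((2 * (1 + β)) / β) • J x - c • x -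
        (((2 * (1 + β)) / β) • J y - c • y) = d - c • b := by
      have h' : ((2 * (1 + β)) / β) • J x - c • x -
          (((2 * (1 + β)) / β) • J y - c • y) =
          ((2 * (1 + β)) / β) • d - c • (x - y) := by
        rw [hd]; module
      rw [h', hxy, smul_add, hcdef]
      match_scalars <;> field_simp
      all_goals ring
    simp only [hN, hxy]
    have hco : ⟪b, d⟫ ≥ (1 / β) * ‖b‖ ^ 2 := by
      have := hB (J x) (J y); rwa [← hd, ← hb] at this
    have hsym : ⟪b, d⟫ = ⟪d, b⟫ := real_inner_comm d b
    have hco'' : ‖b‖ ^ 2 ≤ β * ⟪d, b⟫ := by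
      rw [← hsym]
      have := mul_le_mul_of_nonneg_left hco hβ.le
      calc ‖b‖ ^ 2 = β * ((1 / β) * ‖b‖ ^ 2) := by field_simp
        _ ≤ β * ⟪b, d⟫ := this
    have hc1 : c - 1 = 2 / β := by rw [hcdef]; field_simp; try ring
    have hc1' : 0 < c - 1 := by rw [hc1]; positivity
    have hcβ : (c - 1) * β = 2 := by rw [hc1]; field_simp
    have hc2 : (0 : ℝ) < 1 + c := by nlinarith
    have e1 : ‖d - c • b‖ ^ 2 =
        ‖d‖ ^ 2 - 2 * (c * ⟪d, b⟫) + c ^ 2 * ‖b‖ ^ 2 := by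
      rw [norm_sub_sq_real, real_inner_smul_right, norm_smul]
      have : ‖c‖ ^ 2 = c ^ 2 := by rw [Real.norm_eq_abs, sq_abs]
      rw [mul_pow, this]; try ring
    have e2 : ‖d + b‖ ^ 2 = ‖d‖ ^ 2 + 2 * ⟪d, b⟫ + ‖b‖ ^ 2 := by
      rw [norm_add_sq_real]; try ring
    have h4 : (c - 1) * ((1 + c) * ‖b‖ ^ 2) ≤ (c - 1) * ((1 + c) * (β * ⟪d, b⟫)) :=
      mul_le_mul_of_nonneg_left (mul_le_mul_of_nonneg_left hco'' hc2.le) hc1'.le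
    have h5 : (c - 1) * ((1 + c) * (β * ⟪d, b⟫)) = 2 * ((1 + c) * ⟪d, b⟫) := by
      have h' : (c - 1) * ((1 + c) * (β * ⟪d, b⟫)) =
          ((c - 1) * β) * ((1 + c) * ⟪d, b⟫) := by ring
      rw [h', hcβ]
    have key : ‖d - c • b‖ ^ 2 ≤ ‖d + b‖ ^ 2 := by
      rw [e1, e2]; nlinarith [h4, h5]
    nlinarith [norm_nonneg (d - c • b), norm_nonneg (d + b), key]
  · intro x
    match_scalars <;> field_simp
    all_goals ring
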